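/- arXiv:2502.03180 — 4 statements merged into one kernel-verified Lean document; each statement's English description precedes it below -/
import Mathlib

section
/- Let n ≥ r+2 and K = ker(ψ : F_r^{(1)} × ⋯ × F_r^{(n)} → ℤ^r) as above, with x_j^{(α)} = a_j^{(α)}(a_j^{(n)})⁻¹. For i, j ∈ {1,…,r} and k ∈ {r+1,…,n−1}, the commutator [x_i^{(k)}(x_i^{(i)})⁻¹, x_j^{(j)}] is trivial in K. -/
section
variable (n r : ℕ)

/-- The direct product of `n` copies of the free group of rank `r`. -/
abbrev Gnr := Fin n → FreeGroup (Fin r)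

/-- `ℤ^r`, written multiplicatively. -/
abbrev Zr (r : ℕ) := Multiplicative (Fin r → ℤ)

/-- The homomorphism `F_r → ℤ^r` sending the `j`-th generator to the `j`-th basis vector. -/
def φr : FreeGroup (Fin r) →* Zr r :=
  FreeGroup.lift (fun j => Multiplicative.ofAdd (Pi.single j 1))

/-- The homomorphism `ψ : F_r^{(1)} × ⋯ × F_r^{(n)} → ℤ^r` with `ψ(a_j^{(α)}) = e_j`. -/
def ψnr : Gnr n r →* Zr r :=
  ∏ α : Fin n, (φr r).comp (Pi.evalMonoidHom (fun _ => FreeGroup (Fin r)) α)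

variable {n} in
/-- The inclusion of the `α`-th factor into the direct product. -/
def ins (α : Fin n) : FreeGroup (Fin r) →* Gnr n r :=
  MonoidHom.mulSingle (fun _ => FreeGroup (Fin r)) α

end

/-- The last index, corresponding to the `n`-th factor. -/
def lastIdx {n : ℕ} (hn : 0 < n) : Fin n := ⟨n - 1, by omega⟩

/-- The generators `x_j^{(α)} = a_j^{(α)} (a_j^{(n)})⁻¹` of the kernel. -/
def xg {n r : ℕ} (hn : 0 < n) (α : Fin n) (j : Fin r) : Gnr n r :=
  ins r α (FreeGroup.of j) * (ins r (lastIdx hn) (FreeGroup.of j))⁻¹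

open scoped commutatorElement

/-- For `n ≥ r+2`, `i, j ∈ {1,…,r}` and `k ∈ {r+1,…,n−1}`, the commutator
`[x_i^{(k)}(x_i^{(i)})⁻¹, x_j^{(j)}]` is trivial. -/
theorem balanced_commute_with_diagonal (n r : ℕ) (hrn : r + 2 ≤ n)
    (i j : Fin r) (k : Fin n) (hk1 : r ≤ k.1) (hk2 : k.1 < n - 1) :
    ⁅xg (by omega : 0 < n) k i *
        (xg (by omega : 0 < n) ⟨i.1, lt_of_lt_of_le i.2 (by omega)⟩ i)⁻¹,
      xg (by omega : 0 < n) ⟨j.1, lt_of_lt_of_le j.2 (by omega)⟩ j⁆ = 1 := by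
  funext α
  simp only [commutatorElement_def, xg, ins, lastIdx, MonoidHom.mulSingle_apply,
    Pi.mul_apply, Pi.inv_apply, Pi.mulSingle_apply, Pi.one_apply]
  split_ifs <;> simp_all [Fin.ext_iff]
  all_goals try omega
  all_goals try group
  all_goals (obtain rfl : j = i := Fin.ext (by assumption); group)
end

section
/- Let G be a group, r ≥ 1, and s₁,…,s_r, t₁,…,t_r ∈ G such that [tᵢ, tⱼ⁻¹sⱼ] = 1 for all i, j ∈ {1,…,r}. Let w(z₁,…,z_r) be any word in r letters. Then in G, w(t₁,…,t_r)⁻¹ · w(s₁,…,s_r) = w(t₁⁻¹s₁, …, t_r⁻¹s_r). -/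
open scoped commutatorElement

/-- The "merge words" identity: if `[tᵢ, tⱼ⁻¹sⱼ] = 1` for all `i, j`, then for every word
`w` in `r` letters, `w(t₁,…,t_r)⁻¹ · w(s₁,…,s_r) = w(t₁⁻¹s₁,…,t_r⁻¹s_r)`. -/
theorem merge_words {G : Type*} [Group G] (r : ℕ) (s t : Fin r → G)
    (h : ∀ i j : Fin r, ⁅t i, (t j)⁻¹ * s j⁆ = 1) (w : FreeGroup (Fin r)) :
    (FreeGroup.lift t w)⁻¹ * FreeGroup.lift s w =
      FreeGroup.lift (fun i => (t i)⁻¹ * s i) w := by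
  set u : Fin r → G := fun i => (t i)⁻¹ * s i with hu
  have hp : ∀ j : Fin r, (pure j : FreeGroup (Fin r)) = FreeGroup.of j := fun _ => rfl
  have h1 : ∀ (i : Fin r) (b : FreeGroup (Fin r)),
      Commute (t i) (FreeGroup.lift u b) := by
    intro i b
    induction b using FreeGroup.induction_on with
    | C1 => simp
    | of j =>
      simp only [hp, FreeGroup.lift_apply_of]
      exact commutatorElement_eq_one_iff_commute.mp (h i j)
    | inv_of j ih => simpa using ih.inv_right
    | mul x y ihx ihy => simpa using ihx.mul_right ihy
  have key : ∀ (a b : FreeGroup (Fin r)),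
      Commute (FreeGroup.lift t a) (FreeGroup.lift u b) := by
    intro a b
    induction a using FreeGroup.induction_on with
    | C1 => simp
    | of i => simpa only [hp, FreeGroup.lift_apply_of] using h1 i b
    | inv_of x ih => simpa using ih.inv_left
    | mul x y ihx ihy => simpa using ihx.mul_left ihy
  have hs : ∀ x : FreeGroup (Fin r),
      FreeGroup.lift s x = FreeGroup.lift t x * FreeGroup.lift u x := by
    intro x
    induction x using FreeGroup.induction_on with
    | C1 => simp
    | of i => simp only [hp, FreeGroup.lift_apply_of, hu]; group
    | inv_of x ih =>
      simp only [map_inv, ih, mul_inv_rev]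
      exact ((key (.of x) (.of x)).inv_inv.symm.eq)
    | mul x y ihx ihy =>
      simp only [map_mul, ihx, ihy]
      rw [mul_assoc, ← mul_assoc (FreeGroup.lift u x), ← (key y x).eq]
      group
  rw [hs w]
  group
end

section
/- Every element g of K = ker(ψ : F_r^{(1)} × ⋯ × F_r^{(n)} → ℤ^r) (n ≥ r+2) admits a unique normal form: a word w_g in the free group on the generators X = {x_j^{(α)} : α ≤ n−1, j ≤ r} representing g that decomposes as w_g = w_g^Δ · w_g^{(1)} ⋯ w_g^{(n−1)}, where each w_g^{(i)} is a word only in the letters x_1^{(i)},…,x_r^{(i)} and w_g^Δ lies in the commutator subgroup of the free group on Δ = (x_1^{(1)},…,x_r^{(r)}). Moreover w_g^{(i)}, with x_j^{(i)} replaced by a_j^{(i)}, represents the projection of g to the i-th factor. -/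
/-- The free group on the generating set `X = {x_j^{(α)} : α ≤ n−1, j ≤ r}` of `K`. -/
abbrev FX (n r : ℕ) := FreeGroup (Fin (n - 1) × Fin r)

/-- Evaluation of words in the letters `X` in the ambient direct product. -/
def evX (n r : ℕ) (hn : 2 ≤ n) : FX n r →* Gnr n r :=
  FreeGroup.lift (fun p => xg (by omega) ⟨p.1.1, by omega⟩ p.2)

/-- The inclusion of words in the letters `x_1^{(i)},…,x_r^{(i)}` into `F(X)`. -/
def insL {n r : ℕ} (i : Fin (n - 1)) : FreeGroup (Fin r) →* FX n r :=
  FreeGroup.lift (fun j => FreeGroup.of (i, j))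

/-- The inclusion of words in the diagonal letters `Δ = (x_1^{(1)},…,x_r^{(r)})`
into `F(X)`. -/
def insD (n r : ℕ) (hrn : r + 2 ≤ n) : FreeGroup (Fin r) →* FX n r :=
  FreeGroup.lift (fun j => FreeGroup.of (⟨j.1, by omega⟩, j))


/-! ### Auxiliary definitions and lemmas -/

/-- `cs hn b` is `b : Fin (n-1)` viewed in `Fin n`. -/
def cs {n : ℕ} (hn : 2 ≤ n) (b : Fin (n-1)) : Fin n := ⟨b.1, by omega⟩

/-- The automorphism of the free group inverting every generator. -/
def ι (r : ℕ) : FreeGroup (Fin r) →* FreeGroup (Fin r) :=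
  FreeGroup.lift (fun j => (FreeGroup.of j)⁻¹)

lemma ι_ι {r : ℕ} (w : FreeGroup (Fin r)) : ι r (ι r w) = w := by
  have h : (ι r).comp (ι r) = MonoidHom.id _ := by
    apply FreeGroup.ext_hom; intro a; simp [ι]
  exact DFunLike.congr_fun h w

lemma φr_ι {r : ℕ} (w : FreeGroup (Fin r)) : φr r (ι r w) = (φr r w)⁻¹ := by
  have h : (φr r).comp (ι r) = (φr r)⁻¹ := by
    apply FreeGroup.ext_hom; intro a; simp [ι, φr]
  exact DFunLike.congr_fun h w

noncomputable def ρ (r : ℕ) : Zr r →* Abelianization (FreeGroup (Fin r)) :=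
  ∏ j : Fin r, (zpowersHom _ (Abelianization.of (FreeGroup.of j))).comp
    (AddMonoidHom.toMultiplicative (Pi.evalAddMonoidHom (fun _ => ℤ) j))

lemma ρ_comp (r : ℕ) : (ρ r).comp (φr r) = Abelianization.of := by
  apply FreeGroup.ext_hom
  intro a
  simp only [MonoidHom.comp_apply, φr, FreeGroup.lift_apply_of, ρ, MonoidHom.finset_prod_apply]
  rw [Finset.prod_eq_single a]
  · simp [zpowersHom]
  · intro b _ hb
    simp [zpowersHom, Pi.single_apply, hb.symm]
  · simp

lemma mem_comm_iff {r : ℕ} (w : FreeGroup (Fin r)) :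
    w ∈ commutator (FreeGroup (Fin r)) ↔ φr r w = 1 := by
  constructor
  · intro h
    exact Abelianization.commutator_subset_ker (φr r) h
  · intro h
    have h1 : Abelianization.of w = 1 := by
      rw [← DFunLike.congr_fun (ρ_comp r) w, MonoidHom.comp_apply, h, map_one]
    rwa [← QuotientGroup.eq_one_iff w]

lemma evX_insL_cs {n r : ℕ} (h : 2 ≤ n) (i b : Fin (n-1)) (w : FreeGroup (Fin r)) :
    evX n r h (insL i w) (cs h b) = if i = b then w else 1 := by
  by_cases hib : i = b
  · subst hib
    have hc : (Pi.evalMonoidHom (fun _ => FreeGroup (Fin r)) (cs h i)).comp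
        ((evX n r h).comp (insL i)) = MonoidHom.id _ := by
      apply FreeGroup.ext_hom; intro j
      have hi := i.2
      simp [evX, insL, xg, ins, lastIdx, cs, Pi.mulSingle_apply, Fin.ext_iff]
      omega
    simpa using DFunLike.congr_fun hc w
  · have hne : ¬ (b.1 = i.1) := fun hh => hib (Fin.ext hh.symm)
    have hc : (Pi.evalMonoidHom (fun _ => FreeGroup (Fin r)) (cs h b)).comp
        ((evX n r h).comp (insL i)) = 1 := by
      apply FreeGroup.ext_hom; intro j
      have hb := b.2
      simp [evX, insL, xg, ins, lastIdx, cs, Pi.mulSingle_apply, Fin.ext_iff, hne]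
      omega
    simpa [hib] using DFunLike.congr_fun hc w

lemma evX_insL_last {n r : ℕ} (h : 2 ≤ n) (i : Fin (n-1)) (w : FreeGroup (Fin r)) :
    evX n r h (insL i w) (lastIdx (by omega)) = ι r w := by
  have hc : (Pi.evalMonoidHom (fun _ => FreeGroup (Fin r)) (lastIdx (show 0 < n by omega))).comp
      ((evX n r h).comp (insL i)) = ι r := by
    apply FreeGroup.ext_hom; intro j
    have hi := i.2
    have hne : ¬ ((n-1 : ℕ) = i.1) := by omega
    simp [evX, insL, xg, ins, ι, lastIdx, Pi.mulSingle_apply, Fin.ext_iff, hne]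
  exact DFunLike.congr_fun hc w

lemma evX_insD_last {n r : ℕ} (h : 2 ≤ n) (hrn : r + 2 ≤ n) (d : FreeGroup (Fin r)) :
    evX n r h (insD n r hrn d) (lastIdx (by omega)) = ι r d := by
  have hc : (Pi.evalMonoidHom (fun _ => FreeGroup (Fin r)) (lastIdx (show 0 < n by omega))).comp
      ((evX n r h).comp (insD n r hrn)) = ι r := by
    apply FreeGroup.ext_hom; intro j
    have hj := j.2
    have hne : ¬ ((n-1 : ℕ) = j.1) := by omega
    simp [evX, insD, xg, ins, ι, lastIdx, Pi.mulSingle_apply, Fin.ext_iff, hne]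
  exact DFunLike.congr_fun hc d

lemma evX_insD_cs {n r : ℕ} (h : 2 ≤ n) (hrn : r + 2 ≤ n) (b : Fin (n-1))
    (d : FreeGroup (Fin r)) (hd : d ∈ commutator (FreeGroup (Fin r))) :
    evX n r h (insD n r hrn d) (cs h b) = 1 := by
  by_cases hbr : b.1 < r
  · set k : Fin r := ⟨b.1, hbr⟩ with hk
    set τ : FreeGroup (Fin r) →* Multiplicative ℤ :=
      FreeGroup.lift (fun j => if j = k then Multiplicative.ofAdd (1:ℤ) else 1) with hτ
    have hc : (Pi.evalMonoidHom (fun _ => FreeGroup (Fin r)) (cs h b)).comp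
        ((evX n r h).comp (insD n r hrn)) =
        (zpowersHom _ (FreeGroup.of k)).comp τ := by
      apply FreeGroup.ext_hom; intro j
      have hb := b.2
      by_cases hj : j = k
      · subst hj
        have hbn : ¬ (b.1 = n - 1) := by omega
        simp [evX, insD, xg, ins, hτ, lastIdx, cs, Pi.mulSingle_apply, Fin.ext_iff, hk, hbn]
      · have hne : ¬ (b.1 = j.1) := fun hh => hj (Fin.ext (by simp [hk, ← hh]))
        have hne' : ¬ (j.1 = b.1) := fun hh => hne hh.symm
        have hbn : ¬ (b.1 = n - 1) := by omega
        simp [evX, insD, xg, ins, hτ, lastIdx, cs, Pi.mulSingle_apply, Fin.ext_iff, hj, hne,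
          hne', hbn, show ¬ (j.1 = k.1) from fun hh => hj (Fin.ext hh)]
    have hτd : τ d = 1 := Abelianization.commutator_subset_ker τ hd
    have hdc := DFunLike.congr_fun hc d
    simp only [MonoidHom.comp_apply, hτd, map_one] at hdc
    simpa using hdc
  · have hc : (Pi.evalMonoidHom (fun _ => FreeGroup (Fin r)) (cs h b)).comp
        ((evX n r h).comp (insD n r hrn)) = 1 := by
      apply FreeGroup.ext_hom; intro j
      have hj := j.2
      have hne : ¬ (b.1 = j.1) := by omega
      simp [evX, insD, xg, ins, lastIdx, cs, Pi.mulSingle_apply, Fin.ext_iff, hne]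
      omega
    simpa using DFunLike.congr_fun hc d

lemma ofFn_prod_eq_single {M : Type*} [Monoid M] : ∀ {m : ℕ} (f : Fin m → M) (b : Fin m),
    (∀ i, i ≠ b → f i = 1) → (List.ofFn f).prod = f b := by
  intro m
  induction m with
  | zero => exact fun f b _ => b.elim0
  | succ m ih =>
    intro f b hf
    rw [List.ofFn_succ, List.prod_cons]
    cases b using Fin.cases with
    | zero =>
      have h2 : (List.ofFn (fun i : Fin m => f i.succ)).prod = 1 := by
        apply List.prod_eq_one
        intro x hx
        obtain ⟨i, rfl⟩ := List.mem_ofFn.1 hx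
        exact hf _ (Fin.succ_ne_zero i)
      simp [h2]
    | succ b =>
      rw [hf 0 (Fin.succ_ne_zero b).symm, one_mul]
      rw [ih (fun i => f i.succ) b (fun i hi => hf i.succ (by simpa [Fin.succ_inj] using hi))]

lemma prod_split {M : Type*} [CommMonoid M] {n : ℕ} (hn : 2 ≤ n) (f : Fin n → M) :
    ∏ α, f α = (∏ i : Fin (n-1), f (cs hn i)) * f (lastIdx (by omega)) := by
  obtain ⟨m, rfl⟩ : ∃ m, n = m + 1 := ⟨n-1, by omega⟩
  exact Fin.prod_univ_castSucc f

lemma evX_ofFn_apply {n r : ℕ} (h : 2 ≤ n) (fs : Fin (n-1) → FX n r) (β : Fin n) :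
    evX n r h (List.ofFn fs).prod β = (List.ofFn (fun i => evX n r h (fs i) β)).prod := by
  rw [map_list_prod, List.map_ofFn]
  have := map_list_prod (Pi.evalMonoidHom (fun _ => FreeGroup (Fin r)) β)
    (List.ofFn ((evX n r h) ∘ fs))
  simpa [List.map_ofFn, Function.comp_def, Function.eval] using this


/-- Existence and uniqueness of the normal form: every `g ∈ K` is represented by a unique
word `w_g = w_g^Δ · w_g^{(1)} ⋯ w_g^{(n−1)}`, where `w_g^{(i)}` is a word in the letters
`x_1^{(i)},…,x_r^{(i)}` and `w_g^Δ` is a word in the diagonal letters `Δ` lying in the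
commutator subgroup.  Moreover `w_g^{(i)}` (with `x_j^{(i)}` replaced by `a_j^{(i)}`)
represents the projection of `g` to the `i`-th factor. -/
theorem normal_form_exists_unique (n r : ℕ) (hrn : r + 2 ≤ n)
    (g : Gnr n r) (hg : g ∈ (ψnr n r).ker) :
    ∃ (d : FreeGroup (Fin r)) (ws : Fin (n - 1) → FreeGroup (Fin r)),
      (d ∈ commutator (FreeGroup (Fin r)) ∧
        evX n r (by omega)
          (insD n r hrn d * (List.ofFn (fun i : Fin (n - 1) => insL i (ws i))).prod) = g ∧
        ∀ i : Fin (n - 1), ws i = g ⟨i.1, by omega⟩) ∧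
      ∀ (d' : FreeGroup (Fin r)) (ws' : Fin (n - 1) → FreeGroup (Fin r)),
        d' ∈ commutator (FreeGroup (Fin r)) →
        evX n r (by omega)
          (insD n r hrn d' * (List.ofFn (fun i : Fin (n - 1) => insL i (ws' i))).prod) = g →
        d' = d ∧ ws' = ws := by
  have h2 : 2 ≤ n := by omega
  have hlast : (⟨n-1, by omega⟩ : Fin n) = lastIdx (by omega : (0:ℕ) < n) := rfl
  set ws : Fin (n-1) → FreeGroup (Fin r) := fun i => g (cs h2 i) with hws_def
  set P : FreeGroup (Fin r) := (List.ofFn ws).prod with hP_def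
  set d : FreeGroup (Fin r) := ι r (g (lastIdx (by omega))) * P⁻¹ with hd_def
  have hgprod : ∏ α : Fin n, φr r (g α) = 1 := by
    have := hg
    rwa [MonoidHom.mem_ker, ψnr, MonoidHom.finset_prod_apply] at this
  have hφP : φr r P = ∏ i : Fin (n-1), φr r (ws i) := by
    rw [hP_def, map_list_prod, List.map_ofFn, List.prod_ofFn]; rfl
  have hd : d ∈ commutator (FreeGroup (Fin r)) := by
    rw [mem_comm_iff]
    rw [hd_def, map_mul, map_inv, φr_ι, hφP]
    rw [← mul_inv_rev]
    rw [show (∏ i : Fin (n-1), φr r (ws i)) * φr r (g (lastIdx (by omega))) = 1 from ?_, inv_one]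
    rw [← hgprod, prod_split h2 (fun α => φr r (g α))]
  have hdP : d * P = ι r (g (lastIdx (by omega))) := by
    rw [hd_def, inv_mul_cancel_right]
  -- key computation of each component of the evaluation
  have key : ∀ (d' : FreeGroup (Fin r)) (ws' : Fin (n - 1) → FreeGroup (Fin r)),
      d' ∈ commutator (FreeGroup (Fin r)) → ∀ β : Fin n,
      evX n r (by omega)
        (insD n r hrn d' * (List.ofFn (fun i : Fin (n - 1) => insL i (ws' i))).prod) β =
      if hβ : β.1 = n - 1 then ι r (d' * (List.ofFn ws').prod)
      else ws' ⟨β.1, by omega⟩ := by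
    intro d' ws' hd' β
    rw [map_mul, Pi.mul_apply, evX_ofFn_apply]
    by_cases hβ : β.1 = n - 1
    · have hβ' : β = lastIdx (by omega : (0:ℕ) < n) := Fin.ext hβ
      rw [dif_pos hβ, hβ']
      rw [evX_insD_last h2 hrn]
      have : (List.ofFn fun i => evX n r h2 (insL i (ws' i)) (lastIdx (by omega))).prod
          = ι r (List.ofFn ws').prod := by
        have : (fun i => evX n r h2 (insL i (ws' i)) (lastIdx (by omega : (0:ℕ) < n)))
            = fun i => ι r (ws' i) := by
          funext i; exact evX_insL_last h2 i (ws' i)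
        rw [this, map_list_prod, List.map_ofFn]
        rfl
      rw [this, ← map_mul]
    · have hb : β.1 < n - 1 := by have := β.2; omega
      rw [dif_neg hβ]
      have e1 : evX n r h2 (insD n r hrn d') β = 1 := evX_insD_cs h2 hrn ⟨β.1, hb⟩ d' hd'
      rw [e1, one_mul]
      have e2 : (fun i => evX n r h2 (insL i (ws' i)) β)
          = fun i => if i = ⟨β.1, hb⟩ then ws' i else 1 :=
        funext fun i => evX_insL_cs h2 i ⟨β.1, hb⟩ (ws' i)
      rw [e2, ofFn_prod_eq_single _ ⟨β.1, hb⟩ (fun i hi => by rw [if_neg hi])]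
      simp
  refine ⟨d, ws, ⟨hd, ?_, fun i => rfl⟩, ?_⟩
  · funext β
    rw [key d ws hd β]
    by_cases hβ : β.1 = n - 1
    · have hβ' : β = lastIdx (by omega : (0:ℕ) < n) := Fin.ext hβ
      rw [dif_pos hβ, ← hP_def, hdP, ι_ι, hβ']
    · rw [dif_neg hβ]; rfl
  · intro d' ws' hd' heq'
    have hws' : ws' = ws := by
      funext b
      have := congrFun heq' (cs h2 b)
      rw [key d' ws' hd' (cs h2 b)] at this
      have hb2 := b.2
      rw [dif_neg (show ¬ (cs h2 b).1 = n - 1 by simp [cs]; omega)] at this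
      simpa [cs, hws_def] using this
    refine ⟨?_, hws'⟩
    have hL := congrFun heq' (lastIdx (by omega : (0:ℕ) < n))
    rw [key d' ws' hd' _] at hL
    rw [dif_pos (show (lastIdx (by omega : (0:ℕ) < n)).1 = n - 1 from rfl)] at hL
    rw [hws', ← hP_def] at hL
    have h1 := congrArg (ι r) hL
    rw [ι_ι] at h1
    rw [← hdP] at h1
    exact mul_right_cancel h1
end

section
/- Let P ⊆ F(x₁,x₂,y₁,y₂) be the set of words representing the trivial element of the Bridson–Dison group K. Fix Gaussian integers p_x, p_y ∈ ℤ[i], and set p̂_x = p_x − (1/3 + i/3), p̂_y = p_y + (1/3 + i/3). For w ∈ P, define paths γ_x, γ_y in ℂ starting at p̂_x, p̂_y, where each letter x₁^δ (resp. x₂^δ) moves γ_x by δ (resp. iδ) while γ_y stays, and each letter y₁^δ (resp. y₂^δ) moves γ_y by −δ (resp. −iδ) while γ_x stays. Then at every time t ∈ [0,1], the three points 0, γ_x(t), γ_y(t) are pairwise distinct, and γ_x(1) = p̂_x, γ_y(1) = p̂_y; i.e., (γ_x, γ_y) is a loop in the configuration space Conf₂(ℂ∖{0}). -/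
/-- The free group of rank 2. -/
abbrev F2 := FreeGroup (Fin 2)

/-- The direct product of three free groups of rank 2. -/
abbrev G3 := F2 × F2 × F2

/-- `ℤ²`, written multiplicatively. -/
abbrev Z2 := Multiplicative (Fin 2 → ℤ)

/-- The `i`-th standard basis vector of `ℤ²`. -/
def e (i : Fin 2) : Z2 := Multiplicative.ofAdd (Pi.single i 1)

/-- The homomorphism `F₂ → ℤ²` sending the `i`-th generator to `eᵢ`. -/
def φ : F2 →* Z2 := FreeGroup.lift e

/-- Projection to the first factor. -/
def pa : G3 →* F2 := MonoidHom.fst _ _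
/-- Projection to the second factor. -/
def pb : G3 →* F2 := (MonoidHom.fst _ _).comp (MonoidHom.snd _ _)
/-- Projection to the third factor. -/
def pc : G3 →* F2 := (MonoidHom.snd F2 F2).comp (MonoidHom.snd _ _)

/-- The homomorphism `ψ : F₂ × F₂ × F₂ → ℤ²` with `ψ(aᵢ) = ψ(bᵢ) = ψ(cᵢ) = eᵢ`. -/
def ψ : G3 →* Z2 := (φ.comp pa) * (φ.comp pb) * (φ.comp pc)

/-- The generators `aᵢ` of the first factor, inside the product. -/
def a (i : Fin 2) : G3 := (FreeGroup.of i, 1, 1)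
/-- The generators `bᵢ` of the second factor, inside the product. -/
def b (i : Fin 2) : G3 := (1, FreeGroup.of i, 1)
/-- The generators `cᵢ` of the third factor, inside the product. -/
def c (i : Fin 2) : G3 := (1, 1, FreeGroup.of i)

/-- `xᵢ = aᵢ cᵢ⁻¹`. -/
def x (i : Fin 2) : G3 := a i * (c i)⁻¹
/-- `yᵢ = bᵢ cᵢ⁻¹`. -/
def y (i : Fin 2) : G3 := b i * (c i)⁻¹

/-- The alphabet `{x₁, x₂, y₁, y₂}`. -/
abbrev S4 := Fin 2 ⊕ Fin 2

/-- The evaluation map `F(x₁,x₂,y₁,y₂) → F₂ × F₂ × F₂`, `xᵢ ↦ aᵢcᵢ⁻¹`, `yᵢ ↦ bᵢcᵢ⁻¹`. -/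
def ev : FreeGroup S4 →* G3 := FreeGroup.lift (Sum.elim x y)

open Complex in
/-- The displacement of the first point (`γ_x`) caused by a single letter: `x₁^δ` moves by
`δ`, `x₂^δ` moves by `iδ`, the letters `y` do not move it. -/
def dx : S4 × Bool → ℂ
  | (Sum.inl i, δ) => (if δ then 1 else -1) * (if i = 0 then 1 else Complex.I)
  | (Sum.inr _, _) => 0

/-- The displacement of the second point (`γ_y`) caused by a single letter: `y₁^δ` moves by
`−δ`, `y₂^δ` moves by `−iδ`, the letters `x` do not move it. -/
def dy : S4 × Bool → ℂ
  | (Sum.inl _, _) => 0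
  | (Sum.inr i, δ) => -((if δ then 1 else -1) * (if i = 0 then 1 else Complex.I))

/-- The perturbed base point `p̂_x = p_x − (1/3 + i/3)`. -/
noncomputable def hatx (px : GaussianInt) : ℂ :=
  px.toComplex - (1 / 3 + (1 / 3) * Complex.I)

/-- The perturbed base point `p̂_y = p_y + (1/3 + i/3)`. -/
noncomputable def haty (py : GaussianInt) : ℂ :=
  py.toComplex + (1 / 3 + (1 / 3) * Complex.I)

open Complex

/-- Auxiliary: an integer plus `±1/3` or `±2/3` is nonzero. -/
lemma BD_third_ne (m : ℤ) (q : ℝ)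
    (hq : q = 1/3 ∨ q = -1/3 ∨ q = 2/3 ∨ q = -2/3) : (m : ℝ) + q ≠ 0 := by
  intro h
  rcases hq with hq | hq | hq | hq <;> subst hq
  · have h2 : ((3 * m : ℤ) : ℝ) = ((-1 : ℤ) : ℝ) := by push_cast; linarith
    have := Int.cast_injective h2; omega
  · have h2 : ((3 * m : ℤ) : ℝ) = ((1 : ℤ) : ℝ) := by push_cast; linarith
    have := Int.cast_injective h2; omega
  · have h2 : ((3 * m : ℤ) : ℝ) = ((-2 : ℤ) : ℝ) := by push_cast; linarith
    have := Int.cast_injective h2; omega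
  · have h2 : ((3 * m : ℤ) : ℝ) = ((2 : ℤ) : ℝ) := by push_cast; linarith
    have := Int.cast_injective h2; omega

lemma BD_pt_ne_zero (z d : ℂ) (s : ℝ) (m n : ℤ) (q : ℝ)
    (hq : q = 1/3 ∨ q = -1/3 ∨ q = 2/3 ∨ q = -2/3)
    (hre : z.re = m + q) (him : z.im = n + q)
    (hd : d.re = 0 ∨ d.im = 0) : z + (s : ℂ) * d ≠ 0 := by
  intro h
  rcases hd with hd | hd
  · have h0 : (z + (s : ℂ) * d).re = 0 := by rw [h]; simp
    rw [Complex.add_re, Complex.re_ofReal_mul, hd, hre] at h0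
    exact BD_third_ne m q hq (by linarith)
  · have h0 : (z + (s : ℂ) * d).im = 0 := by rw [h]; simp
    rw [Complex.add_im, Complex.im_ofReal_mul, hd, him] at h0
    exact BD_third_ne n q hq (by linarith)

/-- Gaussian-integrality predicate. -/
def BDIsG (z : ℂ) : Prop := (∃ m : ℤ, z.re = m) ∧ (∃ n : ℤ, z.im = n)

lemma BD_isG_dx (p : S4 × Bool) : BDIsG (dx p) := by
  rcases p with ⟨l | l, δ⟩
  · fin_cases l <;> cases δ
    · exact ⟨⟨-1, by norm_num [dx]⟩, ⟨0, by norm_num [dx]⟩⟩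
    · exact ⟨⟨1, by norm_num [dx]⟩, ⟨0, by norm_num [dx]⟩⟩
    · exact ⟨⟨0, by norm_num [dx]⟩, ⟨-1, by norm_num [dx]⟩⟩
    · exact ⟨⟨0, by norm_num [dx]⟩, ⟨1, by norm_num [dx]⟩⟩
  · exact ⟨⟨0, by simp [dx]⟩, ⟨0, by simp [dx]⟩⟩

lemma BD_isG_dy (p : S4 × Bool) : BDIsG (dy p) := by
  rcases p with ⟨l | l, δ⟩
  · exact ⟨⟨0, by simp [dy]⟩, ⟨0, by simp [dy]⟩⟩
  · fin_cases l <;> cases δ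
    · exact ⟨⟨1, by norm_num [dy]⟩, ⟨0, by norm_num [dy]⟩⟩
    · exact ⟨⟨-1, by norm_num [dy]⟩, ⟨0, by norm_num [dy]⟩⟩
    · exact ⟨⟨0, by norm_num [dy]⟩, ⟨1, by norm_num [dy]⟩⟩
    · exact ⟨⟨0, by norm_num [dy]⟩, ⟨-1, by norm_num [dy]⟩⟩

lemma BD_isG_sum (f : S4 × Bool → ℂ) (hf : ∀ p, BDIsG (f p)) :
    ∀ L : List (S4 × Bool), BDIsG ((L.map f).sum)
  | [] => ⟨⟨0, by simp⟩, ⟨0, by simp⟩⟩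
  | p :: t => by
    obtain ⟨⟨m1, h1⟩, ⟨n1, h2⟩⟩ := hf p
    obtain ⟨⟨m2, h3⟩, ⟨n2, h4⟩⟩ := BD_isG_sum f hf t
    exact ⟨⟨m1 + m2, by push_cast [List.map_cons, List.sum_cons, Complex.add_re, h1, h3]; ring⟩,
      ⟨n1 + n2, by push_cast [List.map_cons, List.sum_cons, Complex.add_im, h2, h4]; ring⟩⟩

lemma BD_dx_axis (p : S4 × Bool) : (dx p).re = 0 ∨ (dx p).im = 0 := by
  rcases p with ⟨l | l, δ⟩
  · fin_cases l <;> cases δ <;> simp [dx]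
  · simp [dx]

lemma BD_dy_axis (p : S4 × Bool) : (dy p).re = 0 ∨ (dy p).im = 0 := by
  rcases p with ⟨l | l, δ⟩
  · simp [dy]
  · fin_cases l <;> cases δ <;> simp [dy]

lemma BD_dxy_axis (p : S4 × Bool) : (dx p - dy p).re = 0 ∨ (dx p - dy p).im = 0 := by
  rcases p with ⟨l | l, δ⟩ <;> fin_cases l <;> cases δ <;> simp [dx, dy]

/-- The additive hom `ℤ² → ℂ`, `v ↦ v₀ + v₁ i`. -/
noncomputable def BDm : (Fin 2 → ℤ) →+ ℂ where
  toFun v := (v 0 : ℂ) + (v 1 : ℂ) * Complex.I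
  map_zero' := by simp
  map_add' v w := by push_cast [Pi.add_apply]; ring

lemma BD_sum_toWord (f : S4 × Bool → ℂ) (hf : ∀ l, f (l, false) = -f (l, true))
    (w : FreeGroup S4) :
    ((w.toWord).map f).sum =
      Multiplicative.toAdd
        ((FreeGroup.lift fun l => Multiplicative.ofAdd (f (l, true))) w) := by
  conv_rhs => rw [← FreeGroup.mk_toWord (x := w), FreeGroup.lift_mk]
  generalize w.toWord = L
  induction L with
  | nil => simp
  | cons p t ih =>
    rcases p with ⟨l, δ⟩
    cases δ <;> simp_all [hf l]

lemma BD_lift_dx_eq :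
    (FreeGroup.lift fun l => Multiplicative.ofAdd (dx (l, true))) =
      (AddMonoidHom.toMultiplicative BDm).comp (φ.comp (pa.comp ev)) := by
  refine (FreeGroup.ext_hom _ _ ?_).symm
  rintro (i | i) <;> fin_cases i <;>
    simp [ev, pa, φ, x, y, a, b, c, e, BDm, dx, Pi.single_apply]

lemma BD_lift_dy_eq :
    (FreeGroup.lift fun l => Multiplicative.ofAdd (dy (l, true))) =
      (AddMonoidHom.toMultiplicative (-BDm)).comp (φ.comp (pb.comp ev)) := by
  refine (FreeGroup.ext_hom _ _ ?_).symm
  rintro (i | i) <;> fin_cases i <;>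
    simp [ev, pb, φ, x, y, a, b, c, e, BDm, dy, Pi.single_apply]


lemma BD_hatx_re (px : GaussianInt) : (hatx px).re = (px.re : ℝ) - 1/3 := by
  simp [hatx, ← GaussianInt.intCast_re]
lemma BD_hatx_im (px : GaussianInt) : (hatx px).im = (px.im : ℝ) - 1/3 := by
  simp [hatx, ← GaussianInt.intCast_im]
lemma BD_haty_re (py : GaussianInt) : (haty py).re = (py.re : ℝ) + 1/3 := by
  simp [haty, ← GaussianInt.intCast_re]
lemma BD_haty_im (py : GaussianInt) : (haty py).im = (py.im : ℝ) + 1/3 := by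
  simp [haty, ← GaussianInt.intCast_im]

/-- The pair of piecewise-linear  paths `(γ_x, γ_y)` associated to a word `w` representing
the trivial element of the Bridson–Dison group, with base points `p̂_x, p̂_y`, is a loop in
the configuration space `Conf₂(ℂ∖{0})`: along every segment (the `k`-th letter, at
parameter `s ∈ [0,1]`) the three points `0, γ_x, γ_y` are pairwise distinct, and both paths
return to their starting points. -/
theorem loop_in_configuration_space (px py : GaussianInt)
    (w : FreeGroup S4) (hw : ev w = 1) :
    (((w.toWord).map dx).sum = 0 ∧ ((w.toWord).map dy).sum = 0) ∧
      ∀ (k : ℕ) (hk : k < w.toWord.length) (s : ℝ), 0 ≤ s → s ≤ 1 →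
        (hatx px + (((w.toWord).take k).map dx).sum + (s : ℂ) * dx (w.toWord.get ⟨k, hk⟩))
            ≠ 0 ∧
        (haty py + (((w.toWord).take k).map dy).sum + (s : ℂ) * dy (w.toWord.get ⟨k, hk⟩))
            ≠ 0 ∧
        (hatx px + (((w.toWord).take k).map dx).sum + (s : ℂ) * dx (w.toWord.get ⟨k, hk⟩))
          ≠ (haty py + (((w.toWord).take k).map dy).sum +
              (s : ℂ) * dy (w.toWord.get ⟨k, hk⟩)) := by
  
  have hdx' : ∀ l, dx (l, false) = -dx (l, true) := by
    rintro (i | i) <;> [fin_cases i <;> simp [dx]; simp [dx]]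
  have hdy' : ∀ l, dy (l, false) = -dy (l, true) := by
    rintro (i | i) <;> [simp [dy]; fin_cases i <;> simp [dy]]
  have hx0 : ((w.toWord).map dx).sum = 0 := by
    rw [BD_sum_toWord dx hdx' w, BD_lift_dx_eq]
    simp [hw]
  have hy0 : ((w.toWord).map dy).sum = 0 := by
    rw [BD_sum_toWord dy hdy' w, BD_lift_dy_eq]
    simp [hw]
  refine ⟨⟨hx0, hy0⟩, ?_⟩
  intro k hk s _ _
  set p := w.toWord.get ⟨k, hk⟩ with hp
  obtain ⟨⟨m1, hm1⟩, ⟨n1, hn1⟩⟩ := BD_isG_sum dx BD_isG_dx ((w.toWord).take k)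
  obtain ⟨⟨m2, hm2⟩, ⟨n2, hn2⟩⟩ := BD_isG_sum dy BD_isG_dy ((w.toWord).take k)
  refine ⟨?_, ?_, ?_⟩
  · refine BD_pt_ne_zero _ _ s (px.re + m1) (px.im + n1) (-1/3)
      (by norm_num) ?_ ?_ (BD_dx_axis p)
    · rw [Complex.add_re, hm1, BD_hatx_re]; push_cast; ring
    · rw [Complex.add_im, hn1, BD_hatx_im]; push_cast; ring
  · refine BD_pt_ne_zero _ _ s (py.re + m2) (py.im + n2) (1/3)
      (by norm_num) ?_ ?_ (BD_dy_axis p)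
    · rw [Complex.add_re, hm2, BD_haty_re]; push_cast; ring
    · rw [Complex.add_im, hn2, BD_haty_im]; push_cast; ring
  · have key := BD_pt_ne_zero
      ((hatx px + (((w.toWord).take k).map dx).sum) -
       (haty py + (((w.toWord).take k).map dy).sum)) (dx p - dy p) s
      (px.re + m1 - py.re - m2) (px.im + n1 - py.im - n2) (-2/3)
      (by norm_num) ?_ ?_ (BD_dxy_axis p)
    · exact fun h => key (by linear_combination h)
    · rw [Complex.sub_re, Complex.add_re, Complex.add_re, hm1, hm2, BD_hatx_re, BD_haty_re]
      push_cast; ring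
    · rw [Complex.sub_im, Complex.add_im, Complex.add_im, hn1, hn2, BD_hatx_im, BD_haty_im]
      push_cast; ring
end
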